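/- arXiv:2511.12687 — 3 statements merged into one kernel-verified Lean document; each statement's English description precedes it below -/
import Mathlib

section
/- Let p ∈ (0,1) and ζ-probability q ∈ (0,1]. Let (ω_t)_{t≥1} be i.i.d. Bernoulli(p) and (ζ_t)_{t≥1} i.i.d. Bernoulli(q), with the two sequences independent. Define H_t := ∑_{s=1}^{t} ω_s·ζ_s and A_t := ∑_{s=1}^{t}(1 − ω_s) for t ≥ 0 (H_0 = A_0 = 0), and let τ_C := inf{ t ≥ 0 : H_s ≥ A_s for all s ≥ t } (inf ∅ := ∞). If p·q > 1 − p, then τ_C < ∞ almost surely; if p·q ≤ 1 − p, then τ_C = ∞ almost surely. -/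
open MeasureTheory ProbabilityTheory Finset Filter Topology
open scoped ENNReal NNReal

section helpers

lemma indep_mono' {Ω : Type*} {mΩ : MeasurableSpace Ω} {μ : Measure Ω}
    {m₁ m₂ m₁' m₂' : MeasurableSpace Ω} (h : ProbabilityTheory.Indep m₁ m₂ μ)
    (h1 : m₁' ≤ m₁) (h2 : m₂' ≤ m₂) : ProbabilityTheory.Indep m₁' m₂' μ := by
  rw [ProbabilityTheory.Indep_iff] at h ⊢
  exact fun t1 t2 ht1 ht2 => h t1 t2 (h1 _ ht1) (h2 _ ht2)

lemma comap_comp_le' {α β γ : Type*} [mβ : MeasurableSpace β] [mγ : MeasurableSpace γ]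
    (f : α → β) {g : β → γ} (hg : Measurable g) :
    MeasurableSpace.comap (fun x => g (f x)) mγ ≤ MeasurableSpace.comap f mβ := by
  rw [show (fun x => g (f x)) = g ∘ f from rfl, ← MeasurableSpace.comap_comp]
  exact MeasurableSpace.comap_mono hg.comap_le

lemma indepFun_indep {Ω β γ : Type*} {mΩ : MeasurableSpace Ω} [mβ : MeasurableSpace β]
    [mγ : MeasurableSpace γ] {μ : Measure Ω} {f : Ω → β} {g : Ω → γ}
    (h : ProbabilityTheory.IndepFun f g μ) :
    ProbabilityTheory.Indep (MeasurableSpace.comap f mβ) (MeasurableSpace.comap g mγ) μ := h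

lemma integral_nat_bool {Ω : Type*} [MeasurableSpace Ω] (P : Measure Ω) [IsProbabilityMeasure P]
    (f : Ω → ℕ) (hf : Measurable f) (h1 : ∀ x, f x ≤ 1) :
    ∫ x, (f x : ℝ) ∂P = (P {x | f x = 1}).toReal := by
  have : (fun x => (f x : ℝ)) = Set.indicator {x | f x = 1} (fun _ => (1:ℝ)) := by
    funext x
    rcases Nat.le_one_iff_eq_zero_or_eq_one.1 (h1 x) with h | h <;>
      simp [Set.indicator, h]
  rw [this]
  have := integral_indicator_const (μ := P) (1:ℝ) (hf (measurableSet_singleton 1))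
  simp only [smul_eq_mul, mul_one, measureReal_def] at this
  exact this

/-- the pair process -/
def pairF {Ω : Type*} (ω ζ : ℕ → Ω → ℕ) (s : ℕ) : Ω → ℕ × ℕ := fun x => (ω s x, ζ s x)

/-- increment of `H - A` as a function of the pair -/
noncomputable def phiX : ℕ × ℕ → ℝ :=
  fun ab => (if ab.1 = 1 ∧ ab.2 = 1 then (1:ℝ) else 0) - (if ab.1 = 0 then (1:ℝ) else 0)

/-- increment of `A` as a function of the pair -/
noncomputable def phiB : ℕ × ℕ → ℝ := fun ab => if ab.1 = 0 then (1:ℝ) else 0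

lemma phiX_abs_le (ab : ℕ × ℕ) : |phiX ab| ≤ 1 := by
  rcases ab with ⟨a, b⟩
  unfold phiX
  rcases Nat.eq_zero_or_pos a with h | h <;> split_ifs <;> simp_all <;> norm_num

lemma phiB_abs_le (ab : ℕ × ℕ) : |phiB ab| ≤ 1 := by
  unfold phiB; split_ifs <;> norm_num

/-- partial sums of `phiX` increments -/
noncomputable def SXF {Ω : Type*} (ω ζ : ℕ → Ω → ℕ) (n : ℕ) (x : Ω) : ℝ :=
  ∑ i ∈ Finset.range n, phiX (pairF ω ζ (i+1) x)

end helpers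

example : True := trivial

set_option maxHeartbeats 1000000 in
/-- Stylized Bitcoin model: `(ω t)` i.i.d. Bernoulli(`p`) and `(ζ t)` i.i.d.
Bernoulli(`q`) (encoded in `{0,1} ⊆ ℕ`), the two sequences jointly independent;
`H t = ∑_{s=1}^t ω s · ζ s` (honest height) and `A t = ∑_{s=1}^t (1 − ω s)` (adversarial
height). The time to consensus `τ_C = inf{t : ∀ s ≥ t, H s ≥ A s}` is a.s. finite when
`p·q > 1 − p` and a.s. infinite when `p·q ≤ 1 − p`. -/
theorem stmt16
    {Ω : Type*} [MeasurableSpace Ω] (P : MeasureTheory.Measure Ω)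
    [MeasureTheory.IsProbabilityMeasure P]
    (p q : ℝ) (hp : p ∈ Set.Ioo (0 : ℝ) 1) (hq : q ∈ Set.Ioc (0 : ℝ) 1)
    (ω ζ : ℕ → Ω → ℕ)
    (hωmeas : ∀ t, Measurable (ω t)) (hζmeas : ∀ t, Measurable (ζ t))
    (hωval : ∀ t x, ω t x ≤ 1) (hζval : ∀ t x, ζ t x ≤ 1)
    (hωlaw : ∀ t, P {x | ω t x = 1} = ENNReal.ofReal p)
    (hζlaw : ∀ t, P {x | ζ t x = 1} = ENNReal.ofReal q)
    (hindep : ProbabilityTheory.iIndepFun (Sum.elim ω ζ) P)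
    (H A : ℕ → Ω → ℕ)
    (hH : H = fun t x => ∑ s ∈ Finset.Icc 1 t, ω s x * ζ s x)
    (hA : A = fun t x => ∑ s ∈ Finset.Icc 1 t, (1 - ω s x)) :
    (1 - p < p * q → ∀ᵐ x ∂P, ∃ t : ℕ, ∀ s : ℕ, t ≤ s → A s x ≤ H s x) ∧
    (p * q ≤ 1 - p → ∀ᵐ x ∂P, ¬ ∃ t : ℕ, ∀ s : ℕ, t ≤ s → A s x ≤ H s x) := by
  obtain ⟨hp0, hp1⟩ := hp
  obtain ⟨hq0, hq1⟩ := hq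
  subst hH hA
  -- measurability of the joint family
  have hFmeas : ∀ i : ℕ ⊕ ℕ, Measurable (Sum.elim ω ζ i) := by
    rintro (s | s); exacts [hωmeas s, hζmeas s]
  have hpairmeas : ∀ s, Measurable (pairF ω ζ s) :=
    fun s => (hωmeas s).prodMk (hζmeas s)
  -- complement laws
  have hω0 : ∀ s, P {x | ω s x = 0} = 1 - ENNReal.ofReal p := by
    intro s
    have hc : {x | ω s x = 0} = {x | ω s x = 1}ᶜ := by
      ext x; have := hωval s x
      simp only [Set.mem_compl_iff, Set.mem_setOf_eq]; omega
    rw [hc, measure_compl (show MeasurableSet {x | ω s x = 1} from hωmeas s (measurableSet_singleton 1)) (measure_ne_top _ _),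
      measure_univ, hωlaw]
  have hζ0 : ∀ s, P {x | ζ s x = 0} = 1 - ENNReal.ofReal q := by
    intro s
    have hc : {x | ζ s x = 0} = {x | ζ s x = 1}ᶜ := by
      ext x; have := hζval s x
      simp only [Set.mem_compl_iff, Set.mem_setOf_eq]; omega
    rw [hc, measure_compl (show MeasurableSet {x | ζ s x = 1} from hζmeas s (measurableSet_singleton 1)) (measure_ne_top _ _),
      measure_univ, hζlaw]
  -- pairwise independence of the pairs
  have hpairindep : ∀ {s t : ℕ}, s ≠ t → IndepFun (pairF ω ζ s) (pairF ω ζ t) P := by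
    intro s t hst
    exact hindep.indepFun_prodMk_prodMk hFmeas (Sum.inl s) (Sum.inr s) (Sum.inl t) (Sum.inr t)
      (by simp [hst]) (by simp) (by simp) (by simp [hst])
  -- within-pair independence
  have hωζindep : ∀ s : ℕ, IndepFun (ω s) (ζ s) P := by
    intro s
    exact hindep.indepFun (show (Sum.inl s : ℕ ⊕ ℕ) ≠ Sum.inr s by simp)
  -- joint law of a pair
  have hjoint : ∀ (s : ℕ) (a b : ℕ), P (pairF ω ζ s ⁻¹' {(a, b)}) =
      (if a = 1 then ENNReal.ofReal p else if a = 0 then 1 - ENNReal.ofReal p else 0) *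
      (if b = 1 then ENNReal.ofReal q else if b = 0 then 1 - ENNReal.ofReal q else 0) := by
    intro s a b
    have hset : pairF ω ζ s ⁻¹' {(a, b)} = (ω s ⁻¹' {a}) ∩ (ζ s ⁻¹' {b}) := by
      ext x; simp [pairF, Prod.ext_iff]
    rw [hset, (hωζindep s).measure_inter_preimage_eq_mul _ _ (measurableSet_singleton a)
      (measurableSet_singleton b)]
    have hωa : P (ω s ⁻¹' {a}) =
        (if a = 1 then ENNReal.ofReal p else if a = 0 then 1 - ENNReal.ofReal p else 0) := by
      match a with
      | 0 => rw [show ω s ⁻¹' {0} = {x | ω s x = 0} from rfl]; simpa using hω0 s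
      | 1 => rw [show ω s ⁻¹' {1} = {x | ω s x = 1} from rfl]; simpa using hωlaw s
      | (n+2) =>
        have he : ω s ⁻¹' {n+2} = ∅ := by
          ext x; have := hωval s x; simp; omega
        simp [he]
    have hζb : P (ζ s ⁻¹' {b}) =
        (if b = 1 then ENNReal.ofReal q else if b = 0 then 1 - ENNReal.ofReal q else 0) := by
      match b with
      | 0 => rw [show ζ s ⁻¹' {0} = {x | ζ s x = 0} from rfl]; simpa using hζ0 s
      | 1 => rw [show ζ s ⁻¹' {1} = {x | ζ s x = 1} from rfl]; simpa using hζlaw s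
      | (n+2) =>
        have he : ζ s ⁻¹' {n+2} = ∅ := by
          ext x; have := hζval s x; simp; omega
        simp [he]
    rw [hωa, hζb]
  -- identical distribution of the pairs
  have hidpair : ∀ s t : ℕ, IdentDistrib (pairF ω ζ s) (pairF ω ζ t) P P := by
    intro s t
    refine ⟨(hpairmeas s).aemeasurable, (hpairmeas t).aemeasurable, ?_⟩
    apply MeasureTheory.Measure.ext_of_singleton
    rintro ⟨a, b⟩
    rw [Measure.map_apply (hpairmeas s) (measurableSet_singleton _),
      Measure.map_apply (hpairmeas t) (measurableSet_singleton _), hjoint, hjoint]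
  -- the SLLN machine for functions of the pairs
  have key : ∀ φ : ℕ × ℕ → ℝ, (∀ ab, |φ ab| ≤ 1) →
      ∀ᵐ x ∂P, Tendsto (fun n : ℕ => (∑ i ∈ Finset.range n, φ (pairF ω ζ (i+1) x)) / n)
        atTop (𝓝 (∫ x, φ (pairF ω ζ 1 x) ∂P)) := by
    intro φ hφ
    have hφm : Measurable φ := measurable_of_countable φ
    have hXmeas : ∀ i : ℕ, Measurable (fun x => φ (pairF ω ζ (i+1) x)) :=
      fun i => hφm.comp (hpairmeas _)
    have hXint : Integrable (fun x => φ (pairF ω ζ (0+1) x)) P := by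
      refine (integrable_const (1:ℝ)).mono' (hXmeas 0).aestronglyMeasurable ?_
      exact Filter.Eventually.of_forall fun x => by simpa using hφ _
    have hXindep : Pairwise (Function.onFun (IndepFun · · P) fun i x => φ (pairF ω ζ (i+1) x)) := by
      intro i j hij
      exact (hpairindep (by omega)).comp hφm hφm
    have hXident : ∀ i : ℕ,
        IdentDistrib (fun x => φ (pairF ω ζ (i+1) x)) (fun x => φ (pairF ω ζ (0+1) x)) P P :=
      fun i => (hidpair (i+1) (0+1)).comp hφm
    have := strong_law_ae_real (fun i x => φ (pairF ω ζ (i+1) x)) hXint hXindep hXident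
    simpa using this
  -- pointwise identification of increments
  have hterm : ∀ s x, phiX (pairF ω ζ s x) =
      ((ω s x * ζ s x : ℕ) : ℝ) - ((1 - ω s x : ℕ) : ℝ) := by
    intro s x
    have h1 := hωval s x; have h2 := hζval s x
    unfold phiX pairF
    rcases Nat.le_one_iff_eq_zero_or_eq_one.1 h1 with h | h <;>
      rcases Nat.le_one_iff_eq_zero_or_eq_one.1 h2 with h' | h' <;> simp [h, h']
  have htermB : ∀ s x, phiB (pairF ω ζ s x) = ((1 - ω s x : ℕ) : ℝ) := by
    intro s x
    have h1 := hωval s x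
    unfold phiB pairF
    rcases Nat.le_one_iff_eq_zero_or_eq_one.1 h1 with h | h <;> simp [h]
  -- expectations
  have hcast_meas1 : Measurable (fun x => ((ω 1 x * ζ 1 x : ℕ) : ℝ)) :=
    (measurable_of_countable (Nat.cast : ℕ → ℝ)).comp ((hωmeas 1).mul (hζmeas 1))
  have hcast_meas2 : Measurable (fun x => ((1 - ω 1 x : ℕ) : ℝ)) :=
    (measurable_of_countable (Nat.cast : ℕ → ℝ)).comp (measurable_const.sub (hωmeas 1))
  have hint1 : Integrable (fun x => ((ω 1 x * ζ 1 x : ℕ) : ℝ)) P := by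
    refine (integrable_const (1:ℝ)).mono' hcast_meas1.aestronglyMeasurable ?_
    refine Filter.Eventually.of_forall fun x => ?_
    have := Nat.mul_le_mul (hωval 1 x) (hζval 1 x)
    simp only [Real.norm_eq_abs, Nat.abs_cast]
    exact_mod_cast this
  have hint2 : Integrable (fun x => ((1 - ω 1 x : ℕ) : ℝ)) P := by
    refine (integrable_const (1:ℝ)).mono' hcast_meas2.aestronglyMeasurable ?_
    refine Filter.Eventually.of_forall fun x => ?_
    simp only [Real.norm_eq_abs, Nat.abs_cast]
    exact_mod_cast Nat.sub_le 1 (ω 1 x)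
  have hPmul : P {x | ω 1 x * ζ 1 x = 1} = ENNReal.ofReal p * ENNReal.ofReal q := by
    have hset : {x | ω 1 x * ζ 1 x = 1} = (ω 1 ⁻¹' {1}) ∩ (ζ 1 ⁻¹' {1}) := by
      ext x
      rcases Nat.le_one_iff_eq_zero_or_eq_one.1 (hωval 1 x) with h | h <;>
        rcases Nat.le_one_iff_eq_zero_or_eq_one.1 (hζval 1 x) with h' | h' <;>
        simp [h, h']
    rw [hset, (hωζindep 1).measure_inter_preimage_eq_mul _ _ (measurableSet_singleton 1)
      (measurableSet_singleton 1)]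
    have h1 : P (ω 1 ⁻¹' {1}) = ENNReal.ofReal p := by exact hωlaw 1
    have h2 : P (ζ 1 ⁻¹' {1}) = ENNReal.ofReal q := by exact hζlaw 1
    rw [h1, h2]
  have hE1 : ∫ x, ((ω 1 x * ζ 1 x : ℕ) : ℝ) ∂P = p * q := by
    rw [integral_nat_bool P (fun x => ω 1 x * ζ 1 x) ((hωmeas 1).mul (hζmeas 1))
      (fun x => Nat.mul_le_mul (hωval 1 x) (hζval 1 x)), hPmul, ENNReal.toReal_mul,
      ENNReal.toReal_ofReal hp0.le, ENNReal.toReal_ofReal hq0.le]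
  have hE2 : ∫ x, ((1 - ω 1 x : ℕ) : ℝ) ∂P = 1 - p := by
    have hset : {x | 1 - ω 1 x = 1} = {x | ω 1 x = 0} := by
      ext x; simp only [Set.mem_setOf_eq]; omega
    rw [integral_nat_bool P (fun x => 1 - ω 1 x) (measurable_const.sub (hωmeas 1)) (fun x => Nat.sub_le 1 _),
      hset, hω0]
    rw [show (1:ℝ≥0∞) - ENNReal.ofReal p = ENNReal.ofReal (1 - p) by
      rw [ENNReal.ofReal_sub 1 hp0.le, ENNReal.ofReal_one]]
    exact ENNReal.toReal_ofReal (by linarith)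
  have hEX : ∫ x, phiX (pairF ω ζ 1 x) ∂P = p * q - (1 - p) := by
    rw [show (fun x => phiX (pairF ω ζ 1 x)) =
      fun x => ((ω 1 x * ζ 1 x : ℕ) : ℝ) - ((1 - ω 1 x : ℕ) : ℝ) from funext (hterm 1)]
    rw [integral_sub hint1 hint2, hE1, hE2]
  have hEB : ∫ x, phiB (pairF ω ζ 1 x) ∂P = 1 - p := by
    rw [show (fun x => phiB (pairF ω ζ 1 x)) =
      fun x => ((1 - ω 1 x : ℕ) : ℝ) from funext (htermB 1)]
    exact hE2
  -- the two LLN statements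
  have hSLLNX : ∀ᵐ x ∂P, Tendsto (fun n : ℕ => SXF ω ζ n x / n) atTop
      (𝓝 (p * q - (1 - p))) := by
    have := key phiX phiX_abs_le
    rw [hEX] at this
    exact this
  have hSLLNB : ∀ᵐ x ∂P, Tendsto
      (fun n : ℕ => (∑ i ∈ Finset.range n, phiB (pairF ω ζ (i+1) x)) / n) atTop
      (𝓝 (1 - p)) := by
    have := key phiB phiB_abs_le
    rw [hEB] at this
    exact this
  -- relating `H - A` to `SXF`
  have hcast : ∀ n x, ((∑ s ∈ Finset.Icc 1 n, ω s x * ζ s x : ℕ) : ℝ) -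
      ((∑ s ∈ Finset.Icc 1 n, (1 - ω s x) : ℕ) : ℝ) = SXF ω ζ n x := by
    intro n x
    rw [Nat.cast_sum, Nat.cast_sum, ← Finset.sum_sub_distrib]
    unfold SXF
    rw [← Finset.Ico_add_one_right_eq_Icc, Finset.sum_Ico_eq_sum_range, Nat.add_sub_cancel]
    refine Finset.sum_congr rfl fun i _ => ?_
    rw [add_comm 1 i]
    exact (hterm (i+1) x).symm
  have hAH : ∀ n x, ((∑ s ∈ Finset.Icc 1 n, (1 - ω s x)) ≤
      ∑ s ∈ Finset.Icc 1 n, ω s x * ζ s x) ↔ 0 ≤ SXF ω ζ n x := by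
    intro n x
    rw [← hcast n x, sub_nonneg, Nat.cast_le]
  constructor
  · -- supercritical case
    intro hlt
    filter_upwards [hSLLNX] with x hx
    have hm : (0:ℝ) < p * q - (1 - p) := by linarith
    have hev : ∀ᶠ n : ℕ in atTop, 0 < SXF ω ζ n x / n :=
      hx.eventually (eventually_gt_nhds hm)
    obtain ⟨t, ht⟩ := eventually_atTop.1 (hev.and (eventually_ge_atTop 1))
    refine ⟨t, fun s hs => ?_⟩
    obtain ⟨h1, h2⟩ := ht s hs
    have hpos : 0 < SXF ω ζ s x := by
      rcases div_pos_iff.1 h1 with ⟨ha, _⟩ | ⟨_, hb⟩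
      · exact ha
      · exfalso
        have hs0 : (0:ℝ) < (s:ℝ) := by exact_mod_cast Nat.lt_of_lt_of_le Nat.zero_lt_one h2
        linarith
    exact (hAH s x).2 hpos.le
  · intro hle
    rcases lt_or_eq_of_le hle with hlt | heq
    · -- strictly subcritical
      filter_upwards [hSLLNX] with x hx
      rintro ⟨t, htx⟩
      have hm : p * q - (1 - p) < 0 := by linarith
      have hev : ∀ᶠ n : ℕ in atTop, SXF ω ζ n x / n < 0 :=
        hx.eventually (eventually_lt_nhds hm)
      obtain ⟨N, hN⟩ := eventually_atTop.1 (hev.and (eventually_ge_atTop 1))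
      obtain ⟨h1, h2⟩ := hN (max t N) (le_max_right _ _)
      have h0 : 0 ≤ SXF ω ζ (max t N) x := (hAH (max t N) x).1 (htx _ (le_max_left _ _))
      have hs0 : (0:ℝ) < ((max t N : ℕ):ℝ) := by
        exact_mod_cast Nat.lt_of_lt_of_le Nat.zero_lt_one h2
      have := div_nonneg h0 hs0.le
      linarith
    · -- critical case: martingale argument
      classical
      -- the filtration generated by the pairs
      let F : ℕ → MeasurableSpace Ω := fun n =>
        ⨆ i ∈ Finset.range n, MeasurableSpace.comap (pairF ω ζ (i+1)) inferInstance
      have hFle : ∀ n, F n ≤ ‹MeasurableSpace Ω› :=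
        fun n => iSup₂_le fun i _ => (hpairmeas (i+1)).comap_le
      have hFmono : Monotone F := by
        intro a b hab
        refine iSup₂_le fun i hi => ?_
        exact le_iSup₂ (f := fun i (_ : i ∈ Finset.range b) =>
          MeasurableSpace.comap (pairF ω ζ (i+1)) inferInstance) i
          (Finset.mem_range.2 (lt_of_lt_of_le (Finset.mem_range.1 hi) hab))
      let 𝔽 : Filtration ℕ ‹MeasurableSpace Ω› := ⟨F, hFmono, hFle⟩
      have hself : ∀ s, Measurable[MeasurableSpace.comap (pairF ω ζ s) inferInstance]
          (pairF ω ζ s) := fun s t ht => ⟨t, ht, rfl⟩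
      have hadp : StronglyAdapted 𝔽 (SXF ω ζ) := by
        intro n
        have hm : Measurable[F n] (SXF ω ζ n) := by
          unfold SXF
          refine Finset.measurable_sum _ fun i hi => ?_
          have h1 : Measurable[MeasurableSpace.comap (pairF ω ζ (i+1)) inferInstance]
              (fun x => phiX (pairF ω ζ (i+1) x)) :=
            (measurable_of_countable phiX).comp (hself (i+1))
          exact h1.mono (le_iSup₂ (f := fun i (_ : i ∈ Finset.range n) =>
            MeasurableSpace.comap (pairF ω ζ (i+1)) inferInstance) i hi) le_rfl
        exact hm.stronglyMeasurable
      have hXint' : ∀ i : ℕ, Integrable (fun x => phiX (pairF ω ζ i x)) P := by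
        intro i
        refine (integrable_const (1:ℝ)).mono'
          (((measurable_of_countable phiX).comp (hpairmeas i)).aestronglyMeasurable) ?_
        exact Filter.Eventually.of_forall fun x => by simpa using phiX_abs_le _
      have hSint : ∀ n, Integrable (SXF ω ζ n) P := by
        intro n
        unfold SXF
        exact integrable_finset_sum _ fun i _ => hXint' (i+1)
      -- independence of the next increment from the past
      have hindep' : ∀ n : ℕ, ProbabilityTheory.Indep
          (MeasurableSpace.comap (fun x => phiX (pairF ω ζ (n+1) x)) inferInstance) (F n) P := by
        intro n
        set Sfin : Finset (ℕ ⊕ ℕ) := {Sum.inl (n+1), Sum.inr (n+1)} with hSfin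
        set Tfin : Finset (ℕ ⊕ ℕ) :=
          (Finset.range n).image (fun i => Sum.inl (i+1)) ∪
          (Finset.range n).image (fun i => Sum.inr (i+1)) with hTfin
        have hdisj : Disjoint Sfin Tfin := by
          rw [Finset.disjoint_left]
          rintro a ha hb
          simp only [hSfin, Finset.mem_insert, Finset.mem_singleton] at ha
          simp only [hTfin, Finset.mem_union, Finset.mem_image, Finset.mem_range] at hb
          rcases ha with rfl | rfl <;> rcases hb with ⟨i, hi, h⟩ | ⟨i, hi, h⟩
          · exact absurd (Sum.inl.inj h) (by omega)
          · cases h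
          · cases h
          · exact absurd (Sum.inr.inj h) (by omega)
        have hI := indepFun_indep (hindep.indepFun_finset Sfin Tfin hdisj hFmeas)
        refine indep_mono' hI ?_ ?_
        · have hmem1 : (Sum.inl (n+1) : ℕ ⊕ ℕ) ∈ Sfin := by simp [hSfin]
          have hmem2 : (Sum.inr (n+1) : ℕ ⊕ ℕ) ∈ Sfin := by simp [hSfin]
          have hg : Measurable (fun v : (Sfin → ℕ) =>
              phiX (v ⟨_, hmem1⟩, v ⟨_, hmem2⟩)) :=
            (measurable_of_countable phiX).comp
              ((measurable_pi_apply _).prodMk (measurable_pi_apply _))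
          exact comap_comp_le' (fun a (i : Sfin) => Sum.elim ω ζ (↑i) a) hg
        · refine iSup₂_le fun i hi => ?_
          have hmem1 : (Sum.inl (i+1) : ℕ ⊕ ℕ) ∈ Tfin := by
            simp only [hTfin, Finset.mem_union, Finset.mem_image, Finset.mem_range]
            exact Or.inl ⟨i, Finset.mem_range.1 hi, rfl⟩
          have hmem2 : (Sum.inr (i+1) : ℕ ⊕ ℕ) ∈ Tfin := by
            simp only [hTfin, Finset.mem_union, Finset.mem_image, Finset.mem_range]
            exact Or.inr ⟨i, Finset.mem_range.1 hi, rfl⟩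
          have hg : Measurable (fun v : (Tfin → ℕ) =>
              ((v ⟨_, hmem1⟩, v ⟨_, hmem2⟩) : ℕ × ℕ)) :=
            (measurable_pi_apply _).prodMk (measurable_pi_apply _)
          exact comap_comp_le' (fun a (i : Tfin) => Sum.elim ω ζ (↑i) a) hg
      -- the martingale property
      have hmart : Martingale (SXF ω ζ) 𝔽 P := by
        refine martingale_nat hadp hSint fun n => ?_
        have hXsm : StronglyMeasurable[MeasurableSpace.comap
            (fun x => phiX (pairF ω ζ (n+1) x)) inferInstance]
            (fun x => phiX (pairF ω ζ (n+1) x)) :=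
          Measurable.stronglyMeasurable (fun t ht => ⟨t, ht, rfl⟩)
        have hce := condExp_indep_eq (μ := P)
          (((measurable_of_countable phiX).comp (hpairmeas (n+1))).comap_le)
          (𝔽.le n) hXsm (hindep' n)
        have hzero : ∫ x, phiX (pairF ω ζ (n+1) x) ∂P = 0 := by
          have hid := ((hidpair (n+1) 1).comp (measurable_of_countable phiX)).integral_eq
          simp only [Function.comp_def] at hid
          rw [hid, hEX]
          linarith
        have hsucc : SXF ω ζ (n+1) = SXF ω ζ n + fun x => phiX (pairF ω ζ (n+1) x) := by
          funext x; simp [SXF, Finset.sum_range_succ]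
        rw [hsucc]
        refine EventuallyEq.symm ?_
        calc P[SXF ω ζ n + (fun x => phiX (pairF ω ζ (n+1) x)) | 𝔽 n]
            =ᵐ[P] P[SXF ω ζ n | 𝔽 n] + P[(fun x => phiX (pairF ω ζ (n+1) x)) | 𝔽 n] :=
              condExp_add (hSint n) (hXint' (n+1)) _
          _ =ᵐ[P] SXF ω ζ n + fun _ => (0:ℝ) := by
              refine EventuallyEq.add ?_ ?_
              · rw [condExp_of_stronglyMeasurable (𝔽.le n) (hadp n) (hSint n)]
              · refine hce.trans ?_
                rw [hzero]
          _ = SXF ω ζ n := by funext x; simp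
      -- bounded increments for the negated martingale
      have hbddinc : ∀ᵐ x ∂P, ∀ i,
          |(-(SXF ω ζ)) (i+1) x - (-(SXF ω ζ)) i x| ≤ ((1:ℝ≥0):ℝ) := by
        refine Filter.Eventually.of_forall fun x i => ?_
        have h1 : SXF ω ζ (i+1) x - SXF ω ζ i x = phiX (pairF ω ζ (i+1) x) := by
          simp [SXF, Finset.sum_range_succ]
        have h2 : (-(SXF ω ζ)) (i+1) x - (-(SXF ω ζ)) i x
            = -(SXF ω ζ (i+1) x - SXF ω ζ i x) := by
          simp [Pi.neg_apply]; ring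
        rw [h2, abs_neg, h1]
        simpa using phiX_abs_le _
      have hsubm := (hmart.neg.submartingale).bddAbove_iff_exists_tendsto hbddinc
      -- conclusion
      filter_upwards [hSLLNB, hsubm] with x hB hx
      rintro ⟨t, htx⟩
      -- ω hits 0 infinitely often
      have hio : ∀ N : ℕ, ∃ i, N ≤ i ∧ ω (i+1) x = 0 := by
        intro N
        by_contra hcon
        push_neg at hcon
        have hstab : ∀ n, N ≤ n →
            (∑ i ∈ Finset.range n, phiB (pairF ω ζ (i+1) x)) =
            ∑ i ∈ Finset.range N, phiB (pairF ω ζ (i+1) x) := by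
          intro n hn
          induction n with
          | zero =>
            have : N = 0 := Nat.eq_zero_of_le_zero hn
            rw [this]
          | succ m ih =>
            rcases Nat.lt_or_ge m N with h | h
            · have : N = m + 1 := by omega
              rw [this]
            · have hterm0 : phiB (pairF ω ζ (m+1) x) = 0 := by
                have := hcon m h
                simp [phiB, pairF, this]
              rw [Finset.sum_range_succ, ih h, hterm0, add_zero]
        have h0 : Tendsto
            (fun n : ℕ => (∑ i ∈ Finset.range n, phiB (pairF ω ζ (i+1) x)) / n) atTop
            (𝓝 0) := by
          refine Tendsto.congr' ?_ (tendsto_const_div_atTop_nhds_zero_nat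
            (∑ i ∈ Finset.range N, phiB (pairF ω ζ (i+1) x)))
          filter_upwards [eventually_ge_atTop N] with n hn
          rw [hstab n hn]
        have := tendsto_nhds_unique hB h0
        linarith
      -- `-SXF` is bounded above on this trajectory
      have hnonneg : ∀ n, t ≤ n → 0 ≤ SXF ω ζ n x := fun n hn => (hAH n x).1 (htx n hn)
      have hbdd : BddAbove (Set.range fun n => (-(SXF ω ζ)) n x) := by
        refine ⟨max 0 ((Finset.range (t+1)).sup'
          ⟨0, Finset.mem_range.2 (Nat.succ_pos t)⟩ fun n => -SXF ω ζ n x), ?_⟩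
        rintro y ⟨n, rfl⟩
        rcases le_or_gt n t with h | h
        · exact le_max_of_le_right (Finset.le_sup' (fun n => -SXF ω ζ n x) (Finset.mem_range.mpr (Nat.lt_succ_of_le h)))
        · have := hnonneg n (by omega)
          refine le_max_of_le_left ?_
          simp only [Pi.neg_apply]
          linarith
      obtain ⟨c, hc⟩ := hx.1 hbdd
      have hS : Tendsto (fun n => SXF ω ζ n x) atTop (𝓝 (-c)) := by
        have := hc.neg
        simp only [Pi.neg_apply, neg_neg] at this ⊢
        exact this
      have hinc : Tendsto (fun n => SXF ω ζ (n+1) x - SXF ω ζ n x) atTop (𝓝 0) := by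
        have h1 : Tendsto (fun n => SXF ω ζ (n+1) x) atTop (𝓝 (-c)) :=
          hS.comp (tendsto_add_atTop_nat 1)
        simpa using h1.sub hS
      obtain ⟨N, hN⟩ := (Metric.tendsto_atTop.1 hinc) 1 one_pos
      obtain ⟨i, hiN, hi0⟩ := hio N
      have hd := hN i hiN
      have hval : SXF ω ζ (i+1) x - SXF ω ζ i x = phiX (pairF ω ζ (i+1) x) := by
        simp [SXF, Finset.sum_range_succ]
      rw [hval] at hd
      have hm1 : phiX (pairF ω ζ (i+1) x) = -1 := by
        simp [phiX, pairF, hi0]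
      rw [hm1] at hd
      simp [Real.dist_eq] at hd
end

section
/- Let 0 < λ < μ, p̂ := μ/(λ+μ), ρ := λ/μ, θ := 2·p̂·(1−p̂) ∈ (0, 1/2), s_* := λ + μ − 2√(λμ), B(s) := (λ + μ + s − √((λ+μ+s)² − 4λμ))/(2λ), and D(s) := (λ+s)(μ+s) − λ·p̂·B(s)·( μ(1+ρ²) + (1+ρ)s ). Then −s_* = (λ+μ)(√(2θ) − 1), and for every real x ≥ √(2θ) − 1: (2/(λ+μ)²)·D((λ+μ)·x) = x² + θ·x + 2θ − 1 + (1 + x − θ)·√((1+x)² − 2θ). Moreover, there exists a unique s_{**} ∈ (0, s_*) such that D(−s_{**}) = 0; D(s) > 0 for all s > −s_{**}; and D is differentiable at −s_{**} with D'(−s_{**}) > 0 (so −s_{**} is a simple zero of D). -/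
lemma auxH (t y : ℝ) (ht0 : 0 < t) (ht1 : t < 1) (hy : t ≤ y) :
    0 < 2*(1-t^2/2)*y^3 - 4*(t^2/2)*y^2 + 5*(t^2/2)^2*y - 2*(t^2/2)^2*(1-t^2/2) := by
  have e : 2*(1-t^2/2)*y^3 - 4*(t^2/2)*y^2 + 5*(t^2/2)^2*y - 2*(t^2/2)^2*(1-t^2/2)
      = (t^3/4)*((1-t)*((2-t)*(4+t)))
        + (y-t)*(6*t^2 - 4*t^3 - (7/4)*t^4)
        + (y-t)^2*(t*(6-2*t-3*t^2))
        + (y-t)^3*(2-t^2) := by ring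
  rw [e]
  have hyt : (0:ℝ) ≤ y - t := sub_nonneg.2 hy
  have h1 : (0:ℝ) < (t^3/4)*((1-t)*((2-t)*(4+t))) := by
    apply mul_pos (by positivity)
    apply mul_pos (by linarith) (mul_pos (by linarith) (by linarith))
  have h2 : (0:ℝ) ≤ (y-t)*(6*t^2 - 4*t^3 - (7/4)*t^4) := by
    apply mul_nonneg hyt
    nlinarith [mul_nonneg (mul_nonneg ht0.le ht0.le) (sub_nonneg.2 ht1.le), mul_nonneg (mul_nonneg (mul_nonneg ht0.le ht0.le) ht0.le) (sub_nonneg.2 ht1.le), mul_pos ht0 ht0]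
  have h3 : (0:ℝ) ≤ (y-t)^2*(t*(6-2*t-3*t^2)) := by
    apply mul_nonneg (sq_nonneg _)
    apply mul_nonneg ht0.le
    nlinarith
  have h4 : (0:ℝ) ≤ (y-t)^3*(2-t^2) := by
    apply mul_nonneg (by positivity)
    nlinarith
  linarith


noncomputable def auxf (θ : ℝ) : ℝ → ℝ :=
  fun x => x^2 + θ*x + 2*θ - 1 + (1 + x - θ) * Real.sqrt ((1+x)^2 - 2*θ)

lemma auxF_deriv (θ t : ℝ) (ht0 : 0 < t) (ht1 : t < 1) (ht2 : θ = t^2/2)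
    (z : ℝ) (hz : t - 1 < z) :
    HasDerivAt (auxf θ)
      (2*z + θ + (1 * Real.sqrt ((1+z)^2 - 2*θ) +
        (1 + z - θ) * (1 / (2 * Real.sqrt ((1+z)^2 - 2*θ)) * (2*(1+z))))) z := by
  have hargz : 0 < (1+z)^2 - 2*θ := by nlinarith
  have h1 : HasDerivAt (fun x : ℝ => (1+x)^2 - 2*θ) (2*(1+z)) z := by
    have h0 : HasDerivAt (fun x : ℝ => 1 + x) 1 z := (hasDerivAt_id z).const_add 1
    have := (h0.pow 2).sub_const (2*θ)
    simpa using this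
  have h2 : HasDerivAt (fun x : ℝ => Real.sqrt ((1+x)^2 - 2*θ))
      (1 / (2 * Real.sqrt ((1+z)^2 - 2*θ)) * (2*(1+z))) z :=
    (Real.hasDerivAt_sqrt hargz.ne').comp z h1
  have h3 : HasDerivAt (fun x : ℝ => 1 + x - θ) 1 z := by
    have h0 : HasDerivAt (fun x : ℝ => 1 + x) 1 z := (hasDerivAt_id z).const_add 1
    simpa using h0.sub_const θ
  have h4 : HasDerivAt (fun x : ℝ => x^2 + θ*x + 2*θ - 1) (2*z + θ) z := by
    have ha : HasDerivAt (fun x : ℝ => x^2) (2*z) z := by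
      simpa using hasDerivAt_pow 2 z
    have hb : HasDerivAt (fun x : ℝ => θ*x) θ z := by
      simpa using (hasDerivAt_id z).const_mul θ
    exact ((ha.add hb).add_const (2*θ)).sub_const 1
  have h5 := h4.add (h3.mul h2)
  have h6 : (2*z + θ + (1 * Real.sqrt ((1+z)^2 - 2*θ) +
      (1 + z - θ) * (1 / (2 * Real.sqrt ((1+z)^2 - 2*θ)) * (2*(1+z)))))
      = (2*z + θ) + (1 * Real.sqrt ((1+z)^2 - 2*θ) +
      (1 + z - θ) * (1 / (2 * Real.sqrt ((1+z)^2 - 2*θ)) * (2*(1+z)))) := by ring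
  rw [h6]
  exact h5

lemma auxF_derivpos (θ t : ℝ) (ht0 : 0 < t) (ht1 : t < 1) (ht2 : θ = t^2/2)
    (z : ℝ) (hz : t - 1 < z) (hfz : auxf θ z = 0) :
    0 < 2*z + θ + (1 * Real.sqrt ((1+z)^2 - 2*θ) +
      (1 + z - θ) * (1 / (2 * Real.sqrt ((1+z)^2 - 2*θ)) * (2*(1+z)))) := by
  have hargz : 0 < (1+z)^2 - 2*θ := by nlinarith
  set q := Real.sqrt ((1+z)^2 - 2*θ) with hq
  have hqpos : 0 < q := Real.sqrt_pos.2 hargz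
  have hq2 : q^2 = (1+z)^2 - 2*θ := Real.sq_sqrt hargz.le
  have hθt : θ < t := by nlinarith
  have hV : 0 < 1 + z - θ := by linarith
  have hU : z^2 + θ*z + 2*θ - 1 = -((1 + z - θ) * q) := by
    unfold auxf at hfz; linarith
  have hty : t ≤ 1 + z := by linarith
  have hH : 0 < 2*(1-θ)*(1+z)^3 - 4*θ*(1+z)^2 + 5*θ^2*(1+z) - 2*θ^2*(1-θ) := by
    have := auxH t (1+z) ht0 ht1 hty
    subst ht2; linarith
  have hEq : ((2*(1+z) - 2 + θ)*q + (2*(1+z)^2 - θ*(1+z) - 2*θ)) * ((1 + z - θ)*q)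
      = 2*(1-θ)*(1+z)^3 - 4*θ*(1+z)^2 + 5*θ^2*(1+z) - 2*θ^2*(1-θ) := by
    linear_combination ((2*(1+z) - 2 + θ)*(1 + z - θ))*hq2 +
      (2*(1+z)^2 - θ*(1+z) - 2*θ)*hU
  have hVq : 0 < (1 + z - θ)*q := mul_pos hV hqpos
  have hEpos : 0 < (2*(1+z) - 2 + θ)*q + (2*(1+z)^2 - θ*(1+z) - 2*θ) := by
    have h5 : (2*(1+z) - 2 + θ)*q + (2*(1+z)^2 - θ*(1+z) - 2*θ)
        = (2*(1-θ)*(1+z)^3 - 4*θ*(1+z)^2 + 5*θ^2*(1+z) - 2*θ^2*(1-θ)) / ((1 + z - θ)*q) := by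
      rw [← hEq, mul_div_assoc]
      rw [div_self hVq.ne', mul_one]
    rw [h5]
    exact div_pos hH hVq
  have hkeyq : (2*z + θ + (1 * q + (1 + z - θ) * (1 / (2*q) * (2*(1+z))))) * q
      = (2*(1+z) - 2 + θ)*q + (2*(1+z)^2 - θ*(1+z) - 2*θ) := by
    field_simp
    linear_combination hq2
  have h7 : 2*z + θ + (1 * q + (1 + z - θ) * (1 / (2*q) * (2*(1+z))))
      = ((2*(1+z) - 2 + θ)*q + (2*(1+z)^2 - θ*(1+z) - 2*θ)) / q := by
    rw [← hkeyq, mul_div_assoc, div_self hqpos.ne', mul_one]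
  rw [h7]
  exact div_pos hEpos hqpos

lemma auxF (θ t : ℝ) (ht0 : 0 < t) (ht1 : t < 1) (ht2 : θ = t^2/2) :
    ∃ x0 d : ℝ, t - 1 < x0 ∧ x0 < 0 ∧ auxf θ x0 = 0 ∧
      (∀ w, t - 1 ≤ w → w < x0 → auxf θ w < 0) ∧
      (∀ x, x0 < x → 0 < auxf θ x) ∧
      0 < d ∧ HasDerivAt (auxf θ) d x0 := by
  have hθ0 : 0 < θ := by rw [ht2]; positivity
  have hθ12 : θ < 1/2 := by nlinarith
  have hcont : Continuous (auxf θ) := by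
    unfold auxf
    continuity
  have hfa : auxf θ (t-1) < 0 := by
    unfold auxf
    have h0 : (1+(t-1))^2 - 2*θ = 0 := by rw [ht2]; ring
    rw [h0, Real.sqrt_zero, mul_zero, add_zero]
    nlinarith [mul_pos ht0 (mul_pos (sub_pos.2 ht1) (show (0:ℝ) < 4 + t by linarith))]
  have hf0 : 0 < auxf θ 0 := by
    unfold auxf
    have h1 : (1+(0:ℝ))^2 - 2*θ = 1 - 2*θ := by ring
    rw [h1]
    have hrpos : 0 < Real.sqrt (1-2*θ) := Real.sqrt_pos.2 (by linarith)
    have hr2 : Real.sqrt (1-2*θ)^2 = 1-2*θ := Real.sq_sqrt (by linarith)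
    have hrlt : Real.sqrt (1-2*θ) < 1 - θ :=
      (Real.sqrt_lt' (show 0 < 1-θ by linarith)).2 (by nlinarith)
    nlinarith [hrpos, hrlt, hr2]
  set S := Set.Icc (t-1) (0:ℝ) ∩ {x | auxf θ x = 0} with hS
  have hSne : S.Nonempty := by
    have hle : t - 1 ≤ (0:ℝ) := by linarith
    obtain ⟨z, hz, hfz⟩ := intermediate_value_Icc hle hcont.continuousOn
      (⟨hfa.le, hf0.le⟩ : (0:ℝ) ∈ Set.Icc (auxf θ (t-1)) (auxf θ 0))
    exact ⟨z, hz, hfz⟩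
  have hSclosed : IsClosed S := isClosed_Icc.inter (isClosed_eq hcont continuous_const)
  have hSbdd : BddBelow S := ⟨t-1, fun x hx => hx.1.1⟩
  set x0 := sInf S with hx0def
  have hx0S : x0 ∈ S := hSclosed.csInf_mem hSne hSbdd
  have hfx0 : auxf θ x0 = 0 := hx0S.2
  have hax0 : t - 1 < x0 :=
    lt_of_le_of_ne hx0S.1.1 (by intro h; rw [← h] at hfx0; linarith)
  have hx00 : x0 < 0 :=
    lt_of_le_of_ne hx0S.1.2 (by intro h; rw [h] at hfx0; linarith)
  have hneg : ∀ w, t - 1 ≤ w → w < x0 → auxf θ w < 0 := by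
    intro w hw1 hw2
    by_contra hcon
    push_neg at hcon
    obtain ⟨z, hz, hfz⟩ := intermediate_value_Icc hw1 hcont.continuousOn
      (⟨hfa.le, hcon⟩ : (0:ℝ) ∈ Set.Icc (auxf θ (t-1)) (auxf θ w))
    have hzS : z ∈ S := ⟨⟨hz.1, by linarith [hz.2, hw2, hx00]⟩, hfz⟩
    have := csInf_le hSbdd hzS
    rw [← hx0def] at this
    linarith [hz.2]
  have hlocal : ∀ z, t - 1 < z → auxf θ z = 0 →
      (∀ᶠ x in nhdsWithin z (Set.Ioi z), 0 < auxf θ x) ∧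
      (∀ᶠ x in nhdsWithin z (Set.Iio z), auxf θ x < 0) := by
    intro z hz hfz
    have hd := auxF_deriv θ t ht0 ht1 ht2 z hz
    have hdpos := auxF_derivpos θ t ht0 ht1 ht2 z hz hfz
    have hslope := hasDerivAt_iff_tendsto_slope.mp hd
    have hev : ∀ᶠ x in nhdsWithin z {z}ᶜ, 0 < slope (auxf θ) z x :=
      hslope.eventually (eventually_gt_nhds hdpos)
    constructor
    · have h1 : ∀ᶠ x in nhdsWithin z (Set.Ioi z), 0 < slope (auxf θ) z x :=
        hev.filter_mono (nhdsWithin_mono z (fun x hx => ne_of_gt hx))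
      filter_upwards [h1, self_mem_nhdsWithin] with x hx1 hx2
      have hxz : 0 < x - z := sub_pos.2 hx2
      have h2 : auxf θ x = slope (auxf θ) z x * (x - z) := by
        rw [slope_def_field, hfz]
        field_simp
        ring
      rw [h2]
      exact mul_pos hx1 hxz
    · have h1 : ∀ᶠ x in nhdsWithin z (Set.Iio z), 0 < slope (auxf θ) z x :=
        hev.filter_mono (nhdsWithin_mono z (fun x hx => ne_of_lt hx))
      filter_upwards [h1, self_mem_nhdsWithin] with x hx1 hx2
      have hxz : x - z < 0 := sub_neg.2 hx2
      have h2 : auxf θ x = slope (auxf θ) z x * (x - z) := by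
        rw [slope_def_field, hfz]
        field_simp [sub_ne_zero.2 (show x ≠ z from ne_of_lt hx2)]
        ring
      rw [h2]
      exact mul_neg_of_pos_of_neg hx1 hxz
  have hpos : ∀ x, x0 < x → 0 < auxf θ x := by
    by_contra hcon
    push_neg at hcon
    obtain ⟨x1, hx1, hfx1⟩ := hcon
    set A := {x : ℝ | x0 < x ∧ auxf θ x ≤ 0} with hA
    have hAne : A.Nonempty := ⟨x1, hx1, hfx1⟩
    have hAbdd : BddBelow A := ⟨x0, fun x hx => (hx.1).le⟩
    obtain ⟨hright, _⟩ := hlocal x0 hax0 hfx0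
    obtain ⟨b, hb, hIoo⟩ := mem_nhdsGT_iff_exists_Ioo_subset.mp hright
    set u := sInf A with hu
    have hub : ∀ x ∈ A, b ≤ x := by
      intro x hx
      by_contra hbx
      push_neg at hbx
      have hmem : x ∈ Set.Ioo x0 b := ⟨hx.1, hbx⟩
      have := hIoo hmem
      simp only [Set.mem_setOf_eq] at this
      linarith [hx.2]
    have hu_ge : b ≤ u := le_csInf hAne hub
    have hx0u : x0 < u := lt_of_lt_of_le hb hu_ge
    have hfu_le : auxf θ u ≤ 0 := by
      have hclos : u ∈ closure A := csInf_mem_closure hAne hAbdd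
      exact closure_minimal (fun x hx => hx.2)
        (isClosed_le hcont continuous_const) hclos
    have hmid : ∀ x, x0 < x → x < u → 0 < auxf θ x := by
      intro x h1 h2
      by_contra hc
      push_neg at hc
      have hxA : x ∈ A := ⟨h1, hc⟩
      have := csInf_le hAbdd hxA
      rw [← hu] at this
      linarith
    have hfu_ge : 0 ≤ auxf θ u := by
      have hmemcl : u ∈ closure (Set.Ioo x0 u) := by
        rw [closure_Ioo hx0u.ne]
        exact Set.right_mem_Icc.2 hx0u.le
      have hnb : (nhdsWithin u (Set.Ioo x0 u)).NeBot :=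
        mem_closure_iff_nhdsWithin_neBot.mp hmemcl
      have htend : Filter.Tendsto (auxf θ) (nhdsWithin u (Set.Ioo x0 u)) (nhds (auxf θ u)) :=
        (hcont.continuousAt).continuousWithinAt.tendsto
      exact ge_of_tendsto htend
        (eventually_nhdsWithin_of_forall (fun x hx => (hmid x hx.1 hx.2).le))
    have hfu : auxf θ u = 0 := le_antisymm hfu_le hfu_ge
    obtain ⟨_, hleft⟩ := hlocal u (by linarith) hfu
    have hev2 : ∀ᶠ x in nhdsWithin u (Set.Iio u), x0 < x :=
      eventually_nhdsWithin_of_eventually_nhds (eventually_gt_nhds hx0u)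
    have hev3 : ∀ᶠ x in nhdsWithin u (Set.Iio u), x ∈ Set.Iio u :=
      eventually_mem_nhdsWithin
    obtain ⟨x2, hx2a, hx2b, hx2c⟩ := (hleft.and (hev2.and hev3)).exists
    exact absurd (hmid x2 hx2b hx2c) (by linarith)
  exact ⟨x0, _, hax0, hx00, hfx0, hneg, hpos,
    auxF_derivpos θ t ht0 ht1 ht2 x0 hax0 hfx0,
    auxF_deriv θ t ht0 ht1 ht2 x0 hax0⟩

set_option maxHeartbeats 1000000 in
/-- The denominator `D` of the Laplace transform of the time to consensus
in the stylized Bitcoin model has a unique (simple) zero `-s**` with `s** ∈ (0, s*)`, and `D`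
is positive to the right of it; moreover the rescaling identity
`(2/(λ+μ)²)·D((λ+μ)x) = x² + θx + 2θ − 1 + (1+x−θ)·√((1+x)² − 2θ)` holds for
`x ≥ √(2θ) − 1`, where `θ = 2p̂(1−p̂)` and `−s* = (λ+μ)(√(2θ) − 1)`. -/
theorem stmt18 (lam mu phat rho theta sstar : ℝ) (hlam : 0 < lam) (hmu : lam < mu)
    (hphat : phat = mu / (lam + mu)) (hrho : rho = lam / mu)
    (htheta : theta = 2 * phat * (1 - phat))
    (hsstar : sstar = lam + mu - 2 * Real.sqrt (lam * mu))
    (B D : ℝ → ℝ)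
    (hB : B = fun s => (lam + mu + s - Real.sqrt ((lam + mu + s) ^ 2 - 4 * lam * mu)) / (2 * lam))
    (hD : D = fun s =>
      (lam + s) * (mu + s) - lam * phat * B s * (mu * (1 + rho ^ 2) + (1 + rho) * s)) :
    theta ∈ Set.Ioo (0 : ℝ) (1 / 2) ∧
    -sstar = (lam + mu) * (Real.sqrt (2 * theta) - 1) ∧
    (∀ x : ℝ, Real.sqrt (2 * theta) - 1 ≤ x →
      2 / (lam + mu) ^ 2 * D ((lam + mu) * x) =
        x ^ 2 + theta * x + 2 * theta - 1 +
          (1 + x - theta) * Real.sqrt ((1 + x) ^ 2 - 2 * theta)) ∧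
    (∃ sss : ℝ, 0 < sss ∧ sss < sstar ∧ D (-sss) = 0 ∧
      (∀ s : ℝ, 0 < s → s < sstar → D (-s) = 0 → s = sss) ∧
      (∀ s : ℝ, -sss < s → 0 < D s) ∧
      DifferentiableAt ℝ D (-sss) ∧ 0 < deriv D (-sss)) := by
  have hmu0 : 0 < mu := hlam.trans hmu
  have hc : 0 < lam + mu := by linarith
  have hθval : theta = 2*lam*mu/(lam+mu)^2 := by
    rw [htheta, hphat]
    field_simp
    ring
  have hθ0 : 0 < theta := by rw [hθval]; positivity
  have hθ12 : theta < 1/2 := by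
    have hne : lam - mu ≠ 0 := by intro h; nlinarith
    have h2 : 0 < (lam - mu)^2 := sq_pos_of_ne_zero hne
    rw [hθval, div_lt_iff₀ (by positivity)]
    nlinarith
  set t := Real.sqrt (2*theta) with htdef
  have ht2' : t^2 = 2*theta := Real.sq_sqrt (by positivity)
  have ht0 : 0 < t := Real.sqrt_pos.2 (by linarith)
  have ht1 : t < 1 := by nlinarith
  have htheta2 : theta = t^2/2 := by linarith
  -- the -sstar identity
  have h5 : (lam+mu)^2*(2*theta) = 4*(lam*mu) := by
    rw [hθval]; field_simp; ring
  have h6 : (lam+mu)*t = 2*Real.sqrt (lam*mu) := by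
    have e1 : (lam+mu)*t = Real.sqrt ((lam+mu)^2*(2*theta)) := by
      rw [Real.sqrt_mul (sq_nonneg _), Real.sqrt_sq hc.le]
    rw [e1, h5, show (4:ℝ)*(lam*mu) = 2^2*(lam*mu) by ring,
      Real.sqrt_mul (by positivity), Real.sqrt_sq (by norm_num)]
  have hsneg : -sstar = (lam+mu)*(t-1) := by
    rw [hsstar]; linarith [h6]
  -- key rescaling identity
  have hkey : ∀ x : ℝ, D ((lam+mu)*x) = (lam+mu)^2/2 * auxf theta x := by
    intro x
    simp only [hD, hB]
    have e : (lam+mu+(lam+mu)*x)^2 - 4*lam*mu = (lam+mu)^2 * ((1+x)^2 - 2*theta) := by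
      rw [hθval]; field_simp; ring
    rw [e, Real.sqrt_mul (sq_nonneg _), Real.sqrt_sq hc.le]
    unfold auxf
    rw [hphat, hrho, hθval]
    field_simp
    ring
  refine ⟨⟨hθ0, hθ12⟩, hsneg, ?_, ?_⟩
  · intro x _
    have hrfl : auxf theta x = x^2 + theta*x + 2*theta - 1 +
        (1+x-theta)*Real.sqrt ((1+x)^2 - 2*theta) := rfl
    rw [hkey x, ← hrfl]
    field_simp
  · obtain ⟨x0, d, hax0, hx00, hfx0, hneg, hpos, hd0, hdd⟩ :=
      auxF theta t ht0 ht1 htheta2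
    refine ⟨-((lam+mu)*x0), ?_, ?_, ?_, ?_, ?_, ?_⟩
    · have : (lam+mu)*x0 < 0 := mul_neg_of_pos_of_neg hc hx00
      linarith
    · have := (mul_lt_mul_iff_right₀ hc).2 hax0
      linarith [hsneg]
    · rw [neg_neg, hkey x0, hfx0, mul_zero]
    · intro s hs0 hs1 hDs
      have hw : -s = (lam+mu)*(-s/(lam+mu)) := by field_simp; try ring
      rw [hw, hkey] at hDs
      have hfw : auxf theta (-s/(lam+mu)) = 0 := by
        have h2 : ((lam+mu)^2/2 : ℝ) ≠ 0 := by positivity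
        exact (mul_eq_zero.mp hDs).resolve_left h2
      have haw : t - 1 < -s/(lam+mu) := by
        rw [lt_div_iff₀ hc]
        nlinarith [hsneg]
      rcases lt_trichotomy (-s/(lam+mu)) x0 with h | h | h
      · exact absurd hfw (ne_of_lt (hneg _ haw.le h))
      · have : s = -((lam+mu)*(-s/(lam+mu))) := by field_simp; try ring
        rw [this, h]
      · exact absurd hfw (ne_of_gt (hpos _ h))
    · intro s hs
      have hx : x0 < s/(lam+mu) := by
        rw [lt_div_iff₀ hc]
        nlinarith
      have hDs : D s = (lam+mu)^2/2 * auxf theta (s/(lam+mu)) := by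
        have := hkey (s/(lam+mu))
        rwa [show (lam+mu)*(s/(lam+mu)) = s from by field_simp] at this
      rw [hDs]
      exact mul_pos (by positivity) (hpos _ hx)
    · -- differentiability and derivative positivity
      have he : (-(-((lam+mu)*x0)))/(lam+mu) = x0 := by field_simp
      have hd' : HasDerivAt (auxf theta) d ((-(-((lam+mu)*x0)))/(lam+mu)) := by
        rw [he]; exact hdd
      have hinner : HasDerivAt (fun s : ℝ => s/(lam+mu)) (1/(lam+mu)) (-(-((lam+mu)*x0))) := by
        simpa using (hasDerivAt_id (-(-((lam+mu)*x0)))).div_const (lam+mu)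
      have hcomp := HasDerivAt.comp (-(-((lam+mu)*x0))) hd' hinner
      simp only [Function.comp_def] at hcomp
      have hDeq : D = fun s => (lam+mu)^2/2 * auxf theta (s/(lam+mu)) := by
        funext s
        have := hkey (s/(lam+mu))
        rwa [show (lam+mu)*(s/(lam+mu)) = s from by field_simp] at this
      have hDder : HasDerivAt D ((lam+mu)^2/2 * (d * (1/(lam+mu)))) (-(-((lam+mu)*x0))) := by
        rw [hDeq]
        exact hcomp.const_mul _
      refine ⟨hDder.differentiableAt, ?_⟩
      rw [hDder.deriv]
      apply mul_pos (by positivity)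
      exact mul_pos hd0 (by positivity)
end

section
/- For θ ∈ (0, 1/2), define g(x) := x² + θ·x + 2θ − 1 + (1 + x − θ)·√((1+x)² − 2θ) for x ≥ √(2θ) − 1. Then: (i) g(√(2θ) − 1) = 3θ − (2−θ)√(2θ) = (√(2θ) − 1)(θ + 2√(2θ)) < 0; (ii) g(0) = √(1−2θ)·(1 − θ − √(1−2θ)) > 0; (iii) g'(x) > 0 for all x ≥ 0; (iv) g has a unique zero x_* in [√(2θ) − 1, ∞), this zero satisfies √(2θ) − 1 < x_* < 0, g'(x_*) > 0, and g(x) > 0 for all x > x_*. -/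
set_option maxHeartbeats 1000000 in
lemma stmt19_auxA (t r x : ℝ) (ht0 : 0 < t) (hr0 : 0 < r) (hr1 : r < 1)
    (hr2 : r ^ 2 = 2 * t) (h1 : r ≤ 1 + x) (h2 : 1 + x ≤ 1 - t / 2) :
    x ^ 2 + t * x + 2 * t - 1 < 0 := by
  nlinarith [mul_nonneg (sub_nonneg.2 h1) (sub_nonneg.2 h2),
    mul_nonneg (sub_nonneg.2 h1) (by linarith : (0:ℝ) ≤ 1 - t / 2 - r),
    mul_pos hr0 (mul_pos (by linarith : (0:ℝ) < 1 - r) (by linarith : (0:ℝ) < r + 4)),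
    hr2]

set_option maxHeartbeats 1000000 in
lemma stmt19_auxR (t x : ℝ) (ht0 : 0 < t) (hu0 : 0 < 1 + x)
    (hu2 : 2 * t ≤ (1 + x) ^ 2) (h2 : 1 + x ≤ 1 - t / 2) :
    (1 + x - t) ^ 2 * ((1 + x) ^ 2 - 2 * t) < (x ^ 2 + t * x + 2 * t - 1) ^ 2 := by
  nlinarith [mul_nonneg (sub_nonneg.2 hu2) (sub_nonneg.2 h2), sq_nonneg ((1+x)^2 - 2*t),
    mul_nonneg (mul_nonneg (sub_nonneg.2 hu2) (sub_nonneg.2 h2)) hu0.le,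
    mul_nonneg (sub_nonneg.2 hu2) ht0.le, mul_nonneg (sub_nonneg.2 h2) ht0.le,
    mul_pos ht0 hu0, sq_nonneg x, sq_nonneg (1 + x - t), sq_nonneg (2 * (1 + x) - 1),
    mul_nonneg (mul_nonneg (sub_nonneg.2 hu2) ht0.le) hu0.le,
    mul_nonneg (sub_nonneg.2 hu2) (sub_nonneg.2 hu2),
    mul_nonneg (mul_nonneg (sub_nonneg.2 h2) (sub_nonneg.2 h2)) ht0.le]


set_option maxHeartbeats 1000000 in
/-- Properties of the rescaled denominator
`g(x) = x² + θx + 2θ − 1 + (1+x−θ)√((1+x)² − 2θ)` for `θ ∈ (0, 1/2)`: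
its values at `√(2θ) − 1` and `0`, positivity of `g'` on `[0, ∞)`, and its unique zero
`x* ∈ (√(2θ) − 1, 0)`, at which `g' > 0`, with `g > 0` to the right of `x*`. -/
theorem stmt19 (theta : ℝ) (htheta : theta ∈ Set.Ioo (0 : ℝ) (1 / 2))
    (g : ℝ → ℝ)
    (hg : g = fun x => x ^ 2 + theta * x + 2 * theta - 1 +
      (1 + x - theta) * Real.sqrt ((1 + x) ^ 2 - 2 * theta)) :
    (g (Real.sqrt (2 * theta) - 1) = 3 * theta - (2 - theta) * Real.sqrt (2 * theta) ∧
      g (Real.sqrt (2 * theta) - 1) =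
        (Real.sqrt (2 * theta) - 1) * (theta + 2 * Real.sqrt (2 * theta)) ∧
      g (Real.sqrt (2 * theta) - 1) < 0) ∧
    (g 0 = Real.sqrt (1 - 2 * theta) * (1 - theta - Real.sqrt (1 - 2 * theta)) ∧ 0 < g 0) ∧
    (∀ x : ℝ, 0 ≤ x → 0 < deriv g x) ∧
    (∃ xstar : ℝ, Real.sqrt (2 * theta) - 1 < xstar ∧ xstar < 0 ∧ g xstar = 0 ∧
      (∀ x : ℝ, Real.sqrt (2 * theta) - 1 ≤ x → g x = 0 → x = xstar) ∧
      0 < deriv g xstar ∧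
      (∀ x : ℝ, xstar < x → 0 < g x)) := by
  obtain ⟨ht0, ht2⟩ := htheta
  have hgx : ∀ x : ℝ, g x = x ^ 2 + theta * x + 2 * theta - 1 +
      (1 + x - theta) * Real.sqrt ((1 + x) ^ 2 - 2 * theta) := fun x => by rw [hg]
  set r := Real.sqrt (2 * theta) with hrdef
  have h2t : (0:ℝ) < 2 * theta := by linarith
  have hr0 : 0 < r := Real.sqrt_pos.2 h2t
  have hr2 : r ^ 2 = 2 * theta := Real.sq_sqrt h2t.le
  have hr1 : r < 1 := by
    have h := Real.sqrt_lt_sqrt h2t.le (by linarith : 2 * theta < 1)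
    rwa [Real.sqrt_one] at h
  have hrt : theta < r := by
    nlinarith [hr2, mul_pos ht0 (by linarith : (0:ℝ) < 1/2 - theta), hr0, ht0]
  -- Part 1
  have hg1 : g (r - 1) = 3 * theta - (2 - theta) * r := by
    rw [hgx]
    rw [show (1 + (r - 1)) ^ 2 - 2 * theta = 0 by linear_combination hr2, Real.sqrt_zero]
    linear_combination hr2
  have hg1' : g (r - 1) = (r - 1) * (theta + 2 * r) := by
    rw [hg1]; linear_combination (-2 : ℝ) * hr2
  have hneg1 : g (r - 1) < 0 := by
    rw [hg1]
    nlinarith [mul_pos hr0 (mul_pos (by linarith : (0:ℝ) < 1 - r)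
      (by linarith : (0:ℝ) < r + 4)), hr2]
  -- Part 2
  have hq2 : Real.sqrt (1 - 2 * theta) ^ 2 = 1 - 2 * theta :=
    Real.sq_sqrt (by linarith)
  have hq0 : 0 < Real.sqrt (1 - 2 * theta) := Real.sqrt_pos.2 (by linarith)
  have hg0 : g 0 = Real.sqrt (1 - 2 * theta) * (1 - theta - Real.sqrt (1 - 2 * theta)) := by
    rw [hgx]
    rw [show (1 + (0:ℝ)) ^ 2 - 2 * theta = 1 - 2 * theta by ring]
    linear_combination hq2
  have hpos0 : 0 < g 0 := by
    rw [hg0]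
    have hql : Real.sqrt (1 - 2 * theta) < 1 - theta := by
      nlinarith [hq2, mul_pos ht0 ht0, hq0, (show (0:ℝ) < 1 - theta by linarith)]
    exact mul_pos hq0 (by linarith)
  -- Derivative
  have hderiv : ∀ x : ℝ, r - 1 < x → HasDerivAt g
      (2 * x + theta + Real.sqrt ((1 + x) ^ 2 - 2 * theta) +
        (1 + x - theta) * ((1 + x) / Real.sqrt ((1 + x) ^ 2 - 2 * theta))) x := by
    intro x hx
    have hupos : 0 < (1 + x) ^ 2 - 2 * theta := by nlinarith [hr2, hr0]
    have hs : 0 < Real.sqrt ((1 + x) ^ 2 - 2 * theta) := Real.sqrt_pos.2 hupos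
    have hne : (1 + x) ^ 2 - 2 * theta ≠ 0 := ne_of_gt hupos
    have hinner : HasDerivAt (fun y : ℝ => (1 + y) ^ 2 - 2 * theta) (2 * (1 + x)) x := by
      have h1 : HasDerivAt (fun y : ℝ => 1 + y) 1 x := (hasDerivAt_id x).const_add 1
      have h2 := (h1.pow 2).sub_const (2 * theta)
      refine h2.congr_deriv ?_
      push_cast
      ring
    have hsqrt : HasDerivAt (fun y : ℝ => Real.sqrt ((1 + y) ^ 2 - 2 * theta))
        (1 / (2 * Real.sqrt ((1 + x) ^ 2 - 2 * theta)) * (2 * (1 + x))) x :=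
      (Real.hasDerivAt_sqrt hne).comp x hinner
    have hlin : HasDerivAt (fun y : ℝ => 1 + y - theta) 1 x := by
      simpa using ((hasDerivAt_id x).const_add 1).sub_const theta
    have hprod := hlin.mul hsqrt
    have hpoly : HasDerivAt (fun y : ℝ => y ^ 2 + theta * y + 2 * theta - 1)
        (2 * x + theta) x := by
      have h := (((hasDerivAt_pow 2 x).add ((hasDerivAt_id x).const_mul theta)).add_const
        (2 * theta)).sub_const 1
      refine h.congr_deriv ?_
      push_cast
      ring
    have htot := hpoly.add hprod
    rw [hg]
    refine htot.congr_deriv ?_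
    field_simp
    ring
  have hdpos : ∀ x : ℝ, r - 1 < x → -(theta / 2) < x → 0 < deriv g x := by
    intro x h1 h2
    rw [(hderiv x h1).deriv]
    have hupos : 0 < (1 + x) ^ 2 - 2 * theta := by nlinarith [hr2, hr0]
    have hs : 0 < Real.sqrt ((1 + x) ^ 2 - 2 * theta) := Real.sqrt_pos.2 hupos
    have hB : 0 < 1 + x - theta := by linarith
    have h1x : 0 < 1 + x := by linarith
    have hterm : 0 < (1 + x - theta) * ((1 + x) / Real.sqrt ((1 + x) ^ 2 - 2 * theta)) :=
      mul_pos hB (div_pos h1x hs)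
    linarith
  -- continuity
  have hcont : Continuous g := by
    rw [hg]
    have hs : Continuous fun x : ℝ => Real.sqrt ((1 + x) ^ 2 - 2 * theta) :=
      Real.continuous_sqrt.comp (((continuous_const.add continuous_id).pow 2).sub continuous_const)
    have hp : Continuous fun x : ℝ => x ^ 2 + theta * x + 2 * theta - 1 :=
      (((continuous_pow 2).add (continuous_const.mul continuous_id)).add continuous_const).sub
        continuous_const
    have hb : Continuous fun x : ℝ => 1 + x - theta :=
      (continuous_const.add continuous_id).sub continuous_const
    exact hp.add (hb.mul hs)
  -- negative on the left piece
  set c : ℝ := max (r - 1) (-(theta / 2)) with hcdef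
  have hc0 : c < 0 := max_lt (by linarith) (by linarith)
  have hnegleft : ∀ x : ℝ, r - 1 ≤ x → x ≤ c → g x < 0 := by
    intro x hx1 hx2
    rcases le_or_gt (-(theta / 2)) (r - 1) with h | h
    · have hc : c = r - 1 := max_eq_left h
      have hxeq : x = r - 1 := le_antisymm (hc ▸ hx2) hx1
      rw [hxeq]; exact hneg1
    · have hc : c = -(theta / 2) := max_eq_right h.le
      have hx2' : x ≤ -(theta / 2) := hc ▸ hx2
      have hu1 : r ≤ 1 + x := by linarith
      have hu2 : 1 + x ≤ 1 - theta / 2 := by linarith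
      have hu0 : 0 < 1 + x := by linarith
      have hu2t : 2 * theta ≤ (1 + x) ^ 2 := by nlinarith [hr2]
      have hs0 : 0 ≤ Real.sqrt ((1 + x) ^ 2 - 2 * theta) := Real.sqrt_nonneg _
      have hs2 : Real.sqrt ((1 + x) ^ 2 - 2 * theta) ^ 2 = (1 + x) ^ 2 - 2 * theta :=
        Real.sq_sqrt (by linarith)
      have hA : x ^ 2 + theta * x + 2 * theta - 1 < 0 :=
        stmt19_auxA theta r x ht0 hr0 hr1 hr2 hu1 hu2
      have hRpoly : (1 + x - theta) ^ 2 * ((1 + x) ^ 2 - 2 * theta) <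
          (x ^ 2 + theta * x + 2 * theta - 1) ^ 2 :=
        stmt19_auxR theta x ht0 hu0 hu2t hu2
      have hR : ((1 + x - theta) * Real.sqrt ((1 + x) ^ 2 - 2 * theta)) ^ 2 <
          (x ^ 2 + theta * x + 2 * theta - 1) ^ 2 := by
        rw [mul_pow, hs2]; linarith
      have hBs : 0 ≤ (1 + x - theta) * Real.sqrt ((1 + x) ^ 2 - 2 * theta) :=
        mul_nonneg (by linarith) hs0
      have hlt : (1 + x - theta) * Real.sqrt ((1 + x) ^ 2 - 2 * theta) <
          -(x ^ 2 + theta * x + 2 * theta - 1) := by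
        have h1 : ((1 + x - theta) * Real.sqrt ((1 + x) ^ 2 - 2 * theta)) ^ 2 <
            (-(x ^ 2 + theta * x + 2 * theta - 1)) ^ 2 := by
          calc ((1 + x - theta) * Real.sqrt ((1 + x) ^ 2 - 2 * theta)) ^ 2 <
              (x ^ 2 + theta * x + 2 * theta - 1) ^ 2 := hR
            _ = (-(x ^ 2 + theta * x + 2 * theta - 1)) ^ 2 := by ring
        exact lt_of_pow_lt_pow_left₀ 2 (by linarith) h1
      rw [hgx]
      linarith
  -- monotonicity on [c, ∞)
  have hmono : StrictMonoOn g (Set.Ici c) := by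
    apply strictMonoOn_of_deriv_pos (convex_Ici c) hcont.continuousOn
    intro x hx
    rw [interior_Ici] at hx
    exact hdpos x (lt_of_le_of_lt (le_max_left _ _) hx) (lt_of_le_of_lt (le_max_right _ _) hx)
  -- IVT
  obtain ⟨xstar, hxsm, hgxs⟩ :=
    intermediate_value_Ioo (by linarith : r - 1 ≤ 0) hcont.continuousOn ⟨hneg1, hpos0⟩
  obtain ⟨hxs1, hxs2⟩ := hxsm
  have hxc : c < xstar := by
    by_contra h
    push_neg at h
    exact (hnegleft xstar hxs1.le h).ne hgxs
  refine ⟨⟨hg1, hg1', hneg1⟩, ⟨hg0, hpos0⟩, ?_, xstar, hxs1, hxs2, hgxs, ?_, ?_, ?_⟩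
  · intro x hx
    exact hdpos x (by linarith) (by linarith)
  · intro x hx hgx0
    have hxc' : c < x := by
      by_contra h
      push_neg at h
      exact (hnegleft x hx h).ne hgx0
    exact hmono.injOn (Set.mem_Ici.2 hxc'.le) (Set.mem_Ici.2 hxc.le) (by rw [hgx0, hgxs])
  · exact hdpos xstar (lt_of_le_of_lt (le_max_left _ _) hxc)
      (lt_of_le_of_lt (le_max_right _ _) hxc)
  · intro x hx
    have := hmono (Set.mem_Ici.2 hxc.le) (Set.mem_Ici.2 (by linarith : c ≤ x)) hx
    rw [hgxs] at this
    exact this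
end
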